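/- Let $H:(0,R_0)\to(0,\infty)$ be differentiable and suppose there exists a non-decreasing function $\Phi:(0,R_0)\to[0,\infty)$ and $N\geq 1$ such that $\frac{d}{dr}\ln H(r) = \frac{1}{r}(N+1+\Phi(r))$ for all $r \in (0,R_0)$. Then for any $0 < r_1 < r_2 < r_3 < R_0$, $H(r_2) \leq H(r_1)^{\alpha} H(r_3)^{1-\alpha}$ with $\alpha = \frac{1}{\ln(r_2/r_1)}\left(\frac{1}{\ln(r_2/r_1)} + \frac{1}{\ln(r_3/r_2)}\right)^{-1}$. -/

import Mathlib

theorem stmt_9 (R₀ : ℝ) (H Φ : ℝ → ℝ) (N : ℕ) (hN : 1 ≤ N)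
    (hHpos : ∀ r ∈ Set.Ioo (0 : ℝ) R₀, 0 < H r)
    (hΦnn : ∀ r ∈ Set.Ioo (0 : ℝ) R₀, 0 ≤ Φ r)
    (hΦmono : MonotoneOn Φ (Set.Ioo 0 R₀))
    (hderiv : ∀ r ∈ Set.Ioo (0 : ℝ) R₀,
      HasDerivAt (fun ρ => Real.log (H ρ)) (((N : ℝ) + 1 + Φ r) / r) r)
    (r₁ r₂ r₃ α : ℝ) (h1 : 0 < r₁) (h12 : r₁ < r₂) (h23 : r₂ < r₃) (h3 : r₃ < R₀)
    (hα : α = (1 / Real.log (r₂ / r₁)) *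
      (1 / Real.log (r₂ / r₁) + 1 / Real.log (r₃ / r₂))⁻¹) :
    H r₂ ≤ H r₁ ^ α * H r₃ ^ (1 - α) := by
  have h2 : 0 < r₂ := h1.trans h12
  have h3' : 0 < r₃ := h2.trans h23
  have hr₁ : r₁ ∈ Set.Ioo (0:ℝ) R₀ := ⟨h1, by linarith⟩
  have hr₂ : r₂ ∈ Set.Ioo (0:ℝ) R₀ := ⟨h2, by linarith⟩
  have hr₃ : r₃ ∈ Set.Ioo (0:ℝ) R₀ := ⟨h3', h3⟩
  set C : ℝ := (N : ℝ) + 1 + Φ r₂ with hC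
  set f : ℝ → ℝ := fun r => Real.log (H r) - C * Real.log r with hf
  have hfderiv : ∀ r ∈ Set.Ioo (0:ℝ) R₀, HasDerivAt f ((Φ r - Φ r₂) / r) r := by
    intro r hr
    have h1' : HasDerivAt (fun ρ => Real.log (H ρ)) (((N : ℝ) + 1 + Φ r) / r) r :=
      hderiv r hr
    have h2' : HasDerivAt (fun ρ => C * Real.log ρ) (C * r⁻¹) r :=
      (Real.hasDerivAt_log (ne_of_gt hr.1)).const_mul C
    have := h1'.sub h2'
    convert this using 1
    · rfl
    · rfl
    · rfl
    · rw [hC]; simp only [div_eq_mul_inv]; ring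
  have hdiff : ∀ r ∈ Set.Ioo (0:ℝ) R₀, DifferentiableAt ℝ f r :=
    fun r hr => (hfderiv r hr).differentiableAt
  -- f antitone on [r₁, r₂]
  have hsub12 : Set.Icc r₁ r₂ ⊆ Set.Ioo 0 R₀ := fun x hx =>
    ⟨lt_of_lt_of_le h1 hx.1, lt_of_le_of_lt hx.2 (by linarith)⟩
  have hsub23 : Set.Icc r₂ r₃ ⊆ Set.Ioo 0 R₀ := fun x hx =>
    ⟨lt_of_lt_of_le h2 hx.1, lt_of_le_of_lt hx.2 h3⟩
  have hcont12 : ContinuousOn f (Set.Icc r₁ r₂) := fun x hx =>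
    ((hdiff x (hsub12 hx)).continuousAt).continuousWithinAt
  have hcont23 : ContinuousOn f (Set.Icc r₂ r₃) := fun x hx =>
    ((hdiff x (hsub23 hx)).continuousAt).continuousWithinAt
  have hanti : AntitoneOn f (Set.Icc r₁ r₂) := by
    apply antitoneOn_of_deriv_nonpos (convex_Icc r₁ r₂) hcont12
    · intro x hx
      rw [interior_Icc] at hx
      exact (hdiff x (hsub12 (Set.Ioo_subset_Icc_self hx))).differentiableWithinAt
    · intro x hx
      rw [interior_Icc] at hx
      have hx' : x ∈ Set.Ioo (0:ℝ) R₀ := hsub12 (Set.Ioo_subset_Icc_self hx)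
      rw [(hfderiv x hx').deriv]
      have : Φ x ≤ Φ r₂ := hΦmono hx' hr₂ hx.2.le
      apply div_nonpos_of_nonpos_of_nonneg <;> linarith [hx'.1]
  have hmono : MonotoneOn f (Set.Icc r₂ r₃) := by
    apply monotoneOn_of_deriv_nonneg (convex_Icc r₂ r₃) hcont23
    · intro x hx
      rw [interior_Icc] at hx
      exact (hdiff x (hsub23 (Set.Ioo_subset_Icc_self hx))).differentiableWithinAt
    · intro x hx
      rw [interior_Icc] at hx
      have hx' : x ∈ Set.Ioo (0:ℝ) R₀ := hsub23 (Set.Ioo_subset_Icc_self hx)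
      rw [(hfderiv x hx').deriv]
      have : Φ r₂ ≤ Φ x := hΦmono hr₂ hx' hx.1.le
      apply div_nonneg <;> linarith [hx'.1]
  have hf12 : f r₂ ≤ f r₁ :=
    hanti (Set.left_mem_Icc.2 h12.le) (Set.right_mem_Icc.2 h12.le) h12.le
  have hf23 : f r₂ ≤ f r₃ :=
    hmono (Set.left_mem_Icc.2 h23.le) (Set.right_mem_Icc.2 h23.le) h23.le
  set L₁ := Real.log (H r₁)
  set L₂ := Real.log (H r₂)
  set L₃ := Real.log (H r₃)
  set A := Real.log r₂ - Real.log r₁ with hA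
  set B := Real.log r₃ - Real.log r₂ with hB
  have hApos : 0 < A := by
    have := Real.log_lt_log h1 h12; simp [hA]; linarith
  have hBpos : 0 < B := by
    have := Real.log_lt_log h2 h23; simp [hB]; linarith
  have hL12 : L₂ - L₁ ≤ C * A := by
    have h := hf12
    rw [hA, mul_sub]
    simp only [hf] at h
    linarith
  have hL23 : C * B ≤ L₃ - L₂ := by
    have h := hf23
    rw [hB, mul_sub]
    simp only [hf] at h
    linarith
  have hCnn : 0 ≤ C := by
    have h := hΦnn r₂ hr₂
    have hN' : (1:ℝ) ≤ N := by exact_mod_cast hN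
    rw [hC]; linarith
  have hαval : α = B / (A + B) := by
    rw [hα, Real.log_div (ne_of_gt h2) (ne_of_gt h1),
      Real.log_div (ne_of_gt h3') (ne_of_gt h2)]
    rw [← hA, ← hB]
    field_simp
    exact add_comm A B
  have hsum : (0:ℝ) < A + B := by linarith
  have hkey2 : (A + B) * L₂ ≤ B * L₁ + A * L₃ := by
    nlinarith [mul_le_mul_of_nonneg_left hL12 hBpos.le,
      mul_le_mul_of_nonneg_left hL23 hApos.le]
  have hkey : L₂ ≤ α * L₁ + (1 - α) * L₃ := by
    rw [hαval]
    have h1α : (1 : ℝ) - B / (A + B) = A / (A + B) := by field_simp; ring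
    rw [h1α, div_mul_eq_mul_div, div_mul_eq_mul_div, ← add_div,
      le_div_iff₀ hsum]
    linarith
  calc H r₂ = Real.exp L₂ := (Real.exp_log (hHpos r₂ hr₂)).symm
    _ ≤ Real.exp (α * L₁ + (1 - α) * L₃) := Real.exp_le_exp.2 hkey
    _ = H r₁ ^ α * H r₃ ^ (1 - α) := by
        rw [Real.exp_add, Real.rpow_def_of_pos (hHpos r₁ hr₁),
          Real.rpow_def_of_pos (hHpos r₃ hr₃)]
        ring_nf
        rfl
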